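/- Under the hypotheses of the mean-reversion MGF lemma (X_n adapted, |X_n| ≤ σ/2, E[X_{n+1}|F_n]·S_n ≤ 0), one has for every λ ≥ 0 and n ≥ 1: E[exp(λ S_n)] ≤ n·exp(nλ²σ²/2) + n·exp(λ). -/

import Mathlib

open MeasureTheory Finset Real

lemma aux_cosh_le (u : ℝ) (hu : 0 ≤ u) :
    (exp u + exp (-u)) / 2 ≤ exp (2 * u ^ 2) := by
  rcases le_or_gt u 1 with h1 | h1
  · have hb := Real.exp_bound (x := u) (by rw [abs_of_nonneg hu]; exact h1) (n := 2) (by norm_num)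
    have hb' := Real.exp_bound (x := -u) (by rw [abs_neg, abs_of_nonneg hu]; exact h1) (n := 2) (by norm_num)
    simp [Finset.sum_range_succ, abs_of_nonneg hu] at hb hb'
    norm_num at hb hb'
    have h2 : (1 : ℝ) + 2 * u ^ 2 ≤ exp (2 * u ^ 2) := by
      have := Real.add_one_le_exp (2 * u ^ 2); linarith
    have hbu := (abs_sub_le_iff.1 hb).1
    have hbu' := (abs_sub_le_iff.1 hb').1
    nlinarith
  · have h2 : exp (-u) ≤ exp u := exp_le_exp.2 (by linarith)
    have h3 : exp u ≤ exp (2 * u ^ 2) := exp_le_exp.2 (by nlinarith)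
    linarith

lemma aux_key (lam σ s mm : ℝ) (hlam : 0 ≤ lam) (hσ : 0 < σ)
    (hms : mm * s ≤ 0) (hm : |mm| ≤ σ / 2) :
    exp (lam * s) * ((exp (lam * σ / 2) + exp (-(lam * σ / 2))) / 2
      + (2 * mm / σ) * ((exp (lam * σ / 2) - exp (-(lam * σ / 2))) / 2))
    ≤ exp (lam ^ 2 * σ ^ 2 / 2) * exp (lam * s) + 1 := by
  set u := lam * σ / 2 with hu_def
  have hu : 0 ≤ u := by positivity
  have hc : exp (lam ^ 2 * σ ^ 2 / 2) = exp (2 * u ^ 2) := by rw [hu_def]; ring_nf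
  rw [hc]
  have hBpos : 0 ≤ (exp u - exp (-u)) / 2 := by
    have : exp (-u) ≤ exp u := exp_le_exp.2 (by linarith)
    linarith
  have hepos : 0 < exp (lam * s) := exp_pos _
  have hA := aux_cosh_le u hu
  rcases lt_or_ge 0 s with hs | hs
  · have hmm : mm ≤ 0 := by nlinarith
    have hfac : (exp u + exp (-u)) / 2 + (2 * mm / σ) * ((exp u - exp (-u)) / 2)
        ≤ (exp u + exp (-u)) / 2 := by
      have : 2 * mm / σ ≤ 0 := by
        apply div_nonpos_of_nonpos_of_nonneg <;> linarith
      nlinarith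
    calc exp (lam * s) * ((exp u + exp (-u)) / 2 + (2 * mm / σ) * ((exp u - exp (-u)) / 2))
        ≤ exp (lam * s) * exp (2 * u ^ 2) := by
          apply mul_le_mul_of_nonneg_left (le_trans hfac hA) hepos.le
      _ ≤ exp (2 * u ^ 2) * exp (lam * s) + 1 := by nlinarith
  · have hes : exp (lam * s) ≤ 1 := exp_le_one_iff.2 (by nlinarith)
    have hmσ : 2 * mm / σ ≤ 1 := by
      rw [div_le_one hσ]
      have := (abs_le.1 hm).2; linarith
    have hfac : (exp u + exp (-u)) / 2 + (2 * mm / σ) * ((exp u - exp (-u)) / 2) ≤ exp u := by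
      nlinarith
    have hstep : exp (lam * s) * ((exp u + exp (-u)) / 2 + (2 * mm / σ) * ((exp u - exp (-u)) / 2))
        ≤ exp (lam * s) * exp u := mul_le_mul_of_nonneg_left hfac hepos.le
    rcases le_or_gt (exp u) (exp (2 * u ^ 2)) with hcase | hcase
    · calc _ ≤ exp (lam * s) * exp u := hstep
        _ ≤ exp (2 * u ^ 2) * exp (lam * s) + 1 := by nlinarith
    · have hu2 : u < 1 / 2 := by
        by_contra hcon
        push_neg at hcon
        exact absurd (exp_le_exp.2 (by nlinarith : u ≤ 2 * u ^ 2)) (not_le.2 hcase)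
      have hhalf : exp u ≤ exp (2 * u ^ 2) + 1 := by
        have he1 : exp u < exp (1/2 : ℝ) := exp_lt_exp.2 hu2
        have he2 : exp (1/2 : ℝ) < 2 := by
          have h := Real.exp_one_lt_d9
          nlinarith [Real.exp_pos (1/2 : ℝ), Real.exp_add (1/2) (1/2), sq_nonneg (exp (1/2 : ℝ))]
        have : (1:ℝ) ≤ exp (2 * u ^ 2) := by
          rw [Real.one_le_exp_iff]; positivity
        linarith
      calc _ ≤ exp (lam * s) * exp u := hstep
        _ ≤ exp (2 * u ^ 2) * exp (lam * s) + 1 := by nlinarith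

lemma aux_chord (lam σ x : ℝ) (hlam : 0 ≤ lam) (hσ : 0 < σ) (hx : |x| ≤ σ / 2) :
    exp (lam * x) ≤ (exp (lam * σ / 2) + exp (-(lam * σ / 2))) / 2
      + (2 * x / σ) * ((exp (lam * σ / 2) - exp (-(lam * σ / 2))) / 2) := by
  obtain ⟨hx1, hx2⟩ := abs_le.1 hx
  have ht0 : 0 ≤ (x + σ / 2) / σ := div_nonneg (by linarith) hσ.le
  have ht1 : (x + σ / 2) / σ ≤ 1 := by rw [div_le_one hσ]; linarith
  have hb' : (0:ℝ) ≤ 1 - (x + σ / 2) / σ := by linarith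
  have hab : (x + σ / 2) / σ + (1 - (x + σ / 2) / σ) = 1 := by ring
  have h := convexOn_exp.2 (Set.mem_univ (lam * σ / 2)) (Set.mem_univ (-(lam * σ / 2)))
      ht0 hb' hab
  simp only [smul_eq_mul] at h
  have e1 : (x + σ / 2) / σ * (lam * σ / 2) + (1 - (x + σ / 2) / σ) * -(lam * σ / 2) = lam * x := by
    field_simp; ring
  rw [e1] at h
  have e2 : (x + σ / 2) / σ * exp (lam * σ / 2) + (1 - (x + σ / 2) / σ) * exp (-(lam * σ / 2))
      = (exp (lam * σ / 2) + exp (-(lam * σ / 2))) / 2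
        + 2 * x / σ * ((exp (lam * σ / 2) - exp (-(lam * σ / 2))) / 2) := by
    field_simp; ring
  rw [e2] at h
  exact h

theorem stmt3 {Ω : Type*} {m : MeasurableSpace Ω} (ℙ : Measure Ω) [IsProbabilityMeasure ℙ]
    (ℱ : Filtration ℕ m) (σ : ℝ) (hσ : 0 < σ)
    (X : ℕ → Ω → ℝ) (hadapted : Adapted ℱ X)
    (hbdd : ∀ n, ∀ᵐ ω ∂ℙ, |X n ω| ≤ σ / 2)
    (S : ℕ → Ω → ℝ) (hS : ∀ n ω, S n ω = ∑ i ∈ Finset.Icc 1 n, X i ω)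
    (hmr : ∀ n, ∀ᵐ ω ∂ℙ, (ℙ[X (n + 1) | ℱ n]) ω * S n ω ≤ 0) :
    ∀ (lam : ℝ), 0 ≤ lam → ∀ (n : ℕ), 1 ≤ n →
      ∫ ω, exp (lam * S n ω) ∂ℙ ≤
        n * exp (n * lam ^ 2 * σ ^ 2 / 2) + n * exp lam := by
  intro lam hlam n hn
  set c : ℝ := exp (lam ^ 2 * σ ^ 2 / 2) with hc_def
  have hc1 : (1 : ℝ) ≤ c := by rw [hc_def, Real.one_le_exp_iff]; positivity
  -- measurability of S k w.r.t. ℱ k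
  have hSm : ∀ k, StronglyMeasurable[ℱ k] (S k) := by
    intro k
    have h1 : StronglyMeasurable[ℱ k] (fun ω => ∑ i ∈ Finset.Icc 1 k, X i ω) :=
      Finset.stronglyMeasurable_fun_sum _ fun i hi =>
        ((hadapted i).mono (ℱ.mono (Finset.mem_Icc.1 hi).2) le_rfl).stronglyMeasurable
    have h2 : S k = fun ω => ∑ i ∈ Finset.Icc 1 k, X i ω := funext (hS k)
    rw [h2]; exact h1
  -- a.e. bounds
  have hball : ∀ᵐ ω ∂ℙ, ∀ i, |X i ω| ≤ σ / 2 := ae_all_iff.2 hbdd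
  have hSbound : ∀ᵐ ω ∂ℙ, ∀ k : ℕ, |S k ω| ≤ k * (σ / 2) := by
    filter_upwards [hball] with ω hω k
    rw [hS]
    calc |∑ i ∈ Finset.Icc 1 k, X i ω| ≤ ∑ i ∈ Finset.Icc 1 k, |X i ω| :=
          Finset.abs_sum_le_sum_abs _ _
      _ ≤ ∑ _i ∈ Finset.Icc 1 k, σ / 2 := Finset.sum_le_sum fun i _ => hω i
      _ = k * (σ / 2) := by simp [Nat.card_Icc]
  -- integrability
  have hint : ∀ k : ℕ, Integrable (fun ω => exp (lam * S k ω)) ℙ := by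
    intro k
    refine Integrable.mono' (integrable_const (exp (lam * (k * (σ / 2))))) ?_ ?_
    · exact (Real.measurable_exp.comp
        (((hSm k).mono (ℱ.le k)).measurable.const_mul lam)).aestronglyMeasurable
    · filter_upwards [hSbound] with ω hω
      rw [Real.norm_eq_abs, abs_of_pos (exp_pos _)]
      exact exp_le_exp.2 (by nlinarith [(abs_le.1 (hω k)).2])
  have hXint : ∀ i, Integrable (X i) ℙ := by
    intro i
    refine Integrable.mono' (integrable_const (σ / 2)) ((hadapted i).mono (ℱ.le i) le_rfl).aestronglyMeasurable ?_
    filter_upwards [hbdd i] with ω hω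
    rwa [Real.norm_eq_abs]
  -- value at 0
  have ha0 : ∫ ω, exp (lam * S 0 ω) ∂ℙ = 1 := by
    have h0 : ∀ ω, exp (lam * S 0 ω) = 1 := by
      intro ω
      rw [hS]
      simp
    simp only [h0]
    simp
  -- the one-step inequality
  have step : ∀ k : ℕ, ∫ ω, exp (lam * S (k + 1) ω) ∂ℙ ≤
      c * ∫ ω, exp (lam * S k ω) ∂ℙ + 1 := by
    intro k
    set u := lam * σ / 2 with hu_def
    set A := (exp u + exp (-u)) / 2 with hA_def
    set B := (exp u - exp (-u)) / 2 with hB_def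
    set f : Ω → ℝ := fun ω => exp (lam * S k ω) with hf_def
    set g : Ω → ℝ := fun ω => exp (lam * X (k + 1) ω) with hg_def
    have hdec : (fun ω => exp (lam * S (k + 1) ω)) = f * g := by
      funext ω
      have : S (k + 1) ω = S k ω + X (k + 1) ω := by
        rw [hS, hS, Finset.sum_Icc_succ_top (Nat.succ_le_succ (Nat.zero_le k))]
      simp only [hf_def, hg_def, Pi.mul_apply, this, ← Real.exp_add]
      ring_nf
    have hfSM : StronglyMeasurable[ℱ k] f :=
      Real.continuous_exp.comp_stronglyMeasurable (stronglyMeasurable_const.mul (hSm k))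
    have hg_int : Integrable g ℙ := by
      refine Integrable.mono' (integrable_const (exp u)) ?_ ?_
      · exact (Real.measurable_exp.comp
          (((hadapted (k+1)).mono (ℱ.le (k+1)) le_rfl).const_mul lam)).aestronglyMeasurable
      · filter_upwards [hbdd (k+1)] with ω hω
        rw [Real.norm_eq_abs, abs_of_pos (exp_pos _)]
        exact exp_le_exp.2 (by nlinarith [(abs_le.1 hω).2])
    have hfg_int : Integrable (f * g) ℙ := by rw [← hdec]; exact hint (k + 1)
    have hpull : ℙ[f * g|ℱ k] =ᵐ[ℙ] f * ℙ[g|ℱ k] :=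
      condExp_mul_of_stronglyMeasurable_left hfSM hfg_int hg_int
    -- conditional bound on μ := ℙ[X (k+1)|ℱ k]
    have hub : ℙ[X (k + 1)|ℱ k] ≤ᵐ[ℙ] fun _ => σ / 2 := by
      have h := condExp_mono (m := (ℱ k : MeasurableSpace Ω)) (hXint (k+1)) (integrable_const (σ / 2))
        (by filter_upwards [hbdd (k+1)] with ω hω using (abs_le.1 hω).2)
      rwa [condExp_const (ℱ.le k)] at h
    have hlb : (fun _ : Ω => -(σ / 2)) ≤ᵐ[ℙ] ℙ[X (k + 1)|ℱ k] := by
      have h := condExp_mono (m := (ℱ k : MeasurableSpace Ω)) (integrable_const (-(σ / 2))) (hXint (k+1))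
        (by filter_upwards [hbdd (k+1)] with ω hω using (abs_le.1 hω).1)
      rwa [condExp_const (ℱ.le k)] at h
    -- affine function and its conditional expectation
    set φ : Ω → ℝ := fun ω => A + (2 * X (k + 1) ω / σ) * B with hφ_def
    have hφ_int : Integrable φ ℙ := by
      have : φ = fun ω => A + (2 * B / σ) * X (k + 1) ω := by
        funext ω; rw [hφ_def]; ring_nf
      rw [this]
      exact (integrable_const A).add ((hXint (k+1)).const_mul _)
    have hφ_eq : φ = (fun _ => A) + (2 * B / σ) • X (k + 1) := by
      funext ω
      simp only [hφ_def, Pi.add_apply, Pi.smul_apply, smul_eq_mul]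
      ring
    have hcondφ : ℙ[φ|ℱ k] =ᵐ[ℙ] fun ω => A + (2 * B / σ) * (ℙ[X (k + 1)|ℱ k]) ω := by
      rw [hφ_eq]
      refine (condExp_add (integrable_const A) ((hXint (k+1)).smul (2 * B / σ)) (ℱ k)).trans ?_
      rw [condExp_const (ℱ.le k)]
      filter_upwards [condExp_smul (m := ℱ k) (μ := ℙ) (2 * B / σ) (X (k + 1))] with ω hω
      simp only [Pi.add_apply, hω, Pi.smul_apply, smul_eq_mul]
    -- chord bound, conditionally
    have hchord : g ≤ᵐ[ℙ] φ := by
      filter_upwards [hbdd (k+1)] with ω hω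
      exact aux_chord lam σ (X (k + 1) ω) hlam hσ hω
    have hgcond : ℙ[g|ℱ k] ≤ᵐ[ℙ] ℙ[φ|ℱ k] := condExp_mono hg_int hφ_int hchord
    -- the a.e. bound on condexp
    have hmain : ℙ[fun ω => exp (lam * S (k + 1) ω)|ℱ k] ≤ᵐ[ℙ]
        fun ω => c * exp (lam * S k ω) + 1 := by
      rw [hdec]
      filter_upwards [hpull, hgcond, hcondφ, hmr k, hub, hlb] with ω h1 h2 h3 hmrω hubω hlbω
      rw [h1]
      have hgle : (ℙ[g|ℱ k]) ω ≤ A + (2 * B / σ) * (ℙ[X (k + 1)|ℱ k]) ω := by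
        calc (ℙ[g|ℱ k]) ω ≤ (ℙ[φ|ℱ k]) ω := h2
          _ = A + (2 * B / σ) * (ℙ[X (k + 1)|ℱ k]) ω := h3
      have hkey := aux_key lam σ (S k ω) ((ℙ[X (k + 1)|ℱ k]) ω) hlam hσ hmrω
        (abs_le.2 ⟨hlbω, hubω⟩)
      rw [← hu_def, ← hA_def, ← hB_def, ← hc_def] at hkey
      calc f ω * (ℙ[g|ℱ k]) ω
          ≤ f ω * (A + (2 * B / σ) * (ℙ[X (k + 1)|ℱ k]) ω) :=
            mul_le_mul_of_nonneg_left hgle (exp_pos _).le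
        _ = exp (lam * S k ω) * (A + (2 * ((ℙ[X (k + 1)|ℱ k]) ω) / σ) * B) := by
            rw [hf_def]; ring
        _ ≤ c * exp (lam * S k ω) + 1 := hkey
    calc ∫ ω, exp (lam * S (k + 1) ω) ∂ℙ
        = ∫ ω, (ℙ[fun ω => exp (lam * S (k + 1) ω)|ℱ k]) ω ∂ℙ :=
          (integral_condExp (μ := ℙ) (f := fun ω => exp (lam * S (k + 1) ω)) (ℱ.le k)).symm
      _ ≤ ∫ ω, (c * exp (lam * S k ω) + 1) ∂ℙ := by
          refine integral_mono_ae integrable_condExp ?_ hmain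
          exact ((hint k).const_mul c).add (integrable_const 1)
      _ = c * ∫ ω, exp (lam * S k ω) ∂ℙ + 1 := by
          rw [integral_add ((hint k).const_mul c) (integrable_const 1)]
          simp [integral_const_mul]
  -- induction
  have main : ∀ k : ℕ, 1 ≤ k → ∫ ω, exp (lam * S k ω) ∂ℙ ≤ k * c ^ k + k := by
    intro k hk
    induction k with
    | zero => omega
    | succ j ih =>
      rcases Nat.eq_zero_or_pos j with hj | hj
      · subst hj
        have h1 := step 0
        rw [ha0] at h1
        have h2 : (∫ ω, exp (lam * S 1 ω) ∂ℙ) ≤ c + 1 := by simpa using h1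
        push_cast
        norm_num
        linarith
      · have hih := ih hj
        have hstep := step j
        have hbern : 1 + ((j : ℝ) + 1) * (c - 1) ≤ c ^ (j + 1) := by
          have h := one_add_mul_le_pow (a := c - 1) (by linarith) (j + 1)
          have h2 : (1 : ℝ) + (c - 1) = c := by ring
          rw [h2] at h
          push_cast at h
          linarith
        have hmul := mul_le_mul_of_nonneg_left hih (by linarith : (0:ℝ) ≤ c)
        have hps : c ^ (j + 1) = c ^ j * c := pow_succ c j
        push_cast
        nlinarith [Nat.cast_nonneg (α := ℝ) j]
  -- conclude
  have hfin := main n hn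
  have hcpow : c ^ n = exp (n * lam ^ 2 * σ ^ 2 / 2) := by
    rw [hc_def, ← Real.exp_nat_mul]
    ring_nf
  rw [hcpow] at hfin
  have hexp1 : (1:ℝ) ≤ exp lam := by rw [Real.one_le_exp_iff]; exact hlam
  calc ∫ ω, exp (lam * S n ω) ∂ℙ ≤ n * exp (n * lam ^ 2 * σ ^ 2 / 2) + n := hfin
    _ ≤ n * exp (n * lam ^ 2 * σ ^ 2 / 2) + n * exp lam := by
        nlinarith [Nat.cast_nonneg (α := ℝ) n]
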